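/- Let G be a finite simple graph and ℓ ≥ 1 an integer. If G is ℓ-tangle-free, then for every pair of vertices i, j there are at most two self-avoiding paths of length at most ℓ from i to j; in particular, every entry of the path expansion matrix B^(ℓ) satisfies B^(ℓ)_{ij} ≤ 2. -/

import Mathlib

section AuxTangleFree

open SimpleGraph Finset

variable {V : Type*}


/-- Neighbors of `a` along an edge list. -/
private def nbr [Fintype V] [DecidableEq V] (E : List (Sym2 V)) (a : V) : Finset V :=
  Finset.univ.filter fun b => s(a, b) ∈ E

private lemma mem_nbr [Fintype V] [DecidableEq V] {E : List (Sym2 V)} {a b : V} :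
    b ∈ nbr E a ↔ s(a, b) ∈ E := by simp [nbr]

/-- Every vertex on a nontrivial walk lies on one of its edges. -/
private lemma mem_edge_of_mem_support {G : SimpleGraph V} :
    ∀ {u v : V} (p : G.Walk u v), p.length ≠ 0 → ∀ w ∈ p.support, ∃ e ∈ p.edges, w ∈ e := by
  intro u v p
  induction p with
  | nil => simp
  | @cons u x v h p' ih =>
    intro _ w hw
    rcases List.mem_cons.1 (by simpa using hw) with rfl | hw'
    · exact ⟨s(w, x), by simp⟩
    · rcases Nat.eq_zero_or_pos p'.length with h0 | hpos
      · have : p'.support = [x] := by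
          cases p' with
          | nil => rfl
          | cons h q => simp at h0
        rw [this] at hw'
        simp only [List.mem_singleton] at hw'
        subst hw'
        exact ⟨s(u, w), by simp⟩
      · obtain ⟨e, he, hwe⟩ := ih (by omega) w hw'
        exact ⟨e, by simp [he], hwe⟩

/-- A path is determined by its endpoints and edge set. -/
private lemma path_eq_of_edges_eq {G : SimpleGraph V} :
    ∀ {u v : V} (p q : G.Walk u v), p.IsPath → q.IsPath →
      (∀ e, e ∈ p.edges ↔ e ∈ q.edges) → p = q := by
  intro u v p
  induction p with
  | nil =>
    intro q _ hq _
    exact ((SimpleGraph.Walk.isPath_iff_eq_nil (p := q)).1 hq).symm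
  | @cons u x v h p' ih =>
    intro q hp hq hE
    have hx : s(u, x) ∈ q.edges := (hE _).1 (by simp)
    cases q with
    | nil => simp at hx
    | @cons _ y _ h₂ q' =>
      rw [SimpleGraph.Walk.cons_isPath_iff] at hp hq
      have hxy : x = y := by
        rcases List.mem_cons.1 hx with heq | hmem
        · rcases Sym2.eq_iff.1 heq with ⟨_, rfl⟩ | ⟨rfl, rfl⟩
          · rfl
          · exact absurd rfl h.ne
        · exact absurd (q'.fst_mem_support_of_mem_edges hmem) hq.2
      subst hxy
      have hE' : ∀ e, e ∈ p'.edges ↔ e ∈ q'.edges := by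
        intro e
        constructor
        · intro hep
          rcases List.mem_cons.1 ((hE e).1 (by simp [hep])) with rfl | hm
          · exact absurd (p'.fst_mem_support_of_mem_edges hep) hp.2
          · exact hm
        · intro heq
          rcases List.mem_cons.1 ((hE e).2 (by simp [heq])) with rfl | hm
          · exact absurd (q'.fst_mem_support_of_mem_edges heq) hq.2
          · exact hm
      rw [ih q' hp.1 hq.1 hE']

private lemma nbr_card [Fintype V] [DecidableEq V] {G : SimpleGraph V} :
    ∀ {u v : V} (p : G.Walk u v), p.IsPath → ∀ a : V,
      (nbr p.edges a).card =
        if p.length = 0 then 0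
        else if a = u ∨ a = v then 1
        else if a ∈ p.support then 2 else 0 := by
  intro u v p
  induction p with
  | nil => intro _ a; simp [nbr]
  | @cons u x v h p' ih =>
    intro hp a
    rw [SimpleGraph.Walk.cons_isPath_iff] at hp
    have hux : u ≠ x := h.ne
    by_cases hau : a = u
    · subst hau
      have : nbr (SimpleGraph.Walk.cons h p').edges a = {x} := by
        ext b
        simp only [mem_nbr, SimpleGraph.Walk.edges_cons, List.mem_cons, Finset.mem_singleton]
        constructor
        · rintro (heq | hmem)
          · exact (Sym2.congr_right.1 heq)
          · exact absurd (p'.fst_mem_support_of_mem_edges hmem) hp.2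
        · rintro rfl; exact Or.inl rfl
      rw [this]
      simp
    · by_cases hax : a = x
      · subst hax
        have hnm : u ∉ nbr p'.edges a := by
          intro hu
          exact hp.2 (p'.snd_mem_support_of_mem_edges (mem_nbr.1 hu))
        have hins : nbr (SimpleGraph.Walk.cons h p').edges a = insert u (nbr p'.edges a) := by
          ext b
          simp only [mem_nbr, SimpleGraph.Walk.edges_cons, List.mem_cons, Finset.mem_insert,
            mem_nbr]
          constructor
          · rintro (heq | hmem)
            · rcases Sym2.eq_iff.1 heq with ⟨rfl, _⟩ | ⟨_, rfl⟩
              · exact absurd rfl hau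
              · exact Or.inl rfl
            · exact Or.inr hmem
          · rintro (rfl | hmem)
            · exact Or.inl (Sym2.eq_swap)
            · exact Or.inr hmem
        rw [hins, Finset.card_insert_of_notMem hnm]
        rcases Nat.eq_zero_or_pos p'.length with h0 | hpos
        · have hav : a = v := SimpleGraph.Walk.eq_of_length_eq_zero h0
          have : p'.edges = [] := List.length_eq_zero_iff.1 (by rw [p'.length_edges]; exact h0)
          simp [nbr, this, hau, hav]
        · have hav : a ≠ v := by
            intro hav
            subst hav
            rw [(SimpleGraph.Walk.isPath_iff_eq_nil (p := p')).1 hp.1] at hpos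
            simp at hpos
          rw [ih hp.1 a, if_neg (by omega : ¬ p'.length = 0), if_pos (Or.inl rfl)]
          rw [SimpleGraph.Walk.length_cons]
          rw [if_neg (by omega), if_neg (by tauto : ¬ (a = u ∨ a = v)),
            if_pos (by simp [SimpleGraph.Walk.support_cons])]
      · have heq : nbr (SimpleGraph.Walk.cons h p').edges a = nbr p'.edges a := by
          ext b
          simp only [mem_nbr, SimpleGraph.Walk.edges_cons, List.mem_cons]
          constructor
          · rintro (heq | hmem)
            · rcases Sym2.eq_iff.1 heq with ⟨rfl, _⟩ | ⟨rfl, _⟩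
              · exact absurd rfl hau
              · exact absurd rfl hax
            · exact hmem
          · exact fun hmem => Or.inr hmem
        rw [heq, ih hp.1 a]
        rcases Nat.eq_zero_or_pos p'.length with h0 | hpos
        · have hxv : x = v := SimpleGraph.Walk.eq_of_length_eq_zero h0
          have hsupp : p'.support = [x] := by
            cases p' with
            | nil => rfl
            | cons h q => simp at h0
          simp [h0, hau, hax, hxv ▸ hax, SimpleGraph.Walk.support_cons, hsupp]
        · have hs : a ∈ (SimpleGraph.Walk.cons h p').support ↔ a ∈ p'.support := by
            simp [SimpleGraph.Walk.support_cons, hau]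
          rw [SimpleGraph.Walk.length_cons]
          rw [if_neg (by omega : ¬ p'.length = 0), if_neg (by omega : ¬ p'.length + 1 = 0)]
          by_cases hav : a = v
          · rw [if_pos (Or.inr hav), if_pos (Or.inr hav)]
          · rw [if_neg (by tauto : ¬ (a = x ∨ a = v)), if_neg (by tauto : ¬ (a = u ∨ a = v))]
            by_cases hsup : a ∈ p'.support
            · rw [if_pos hsup, if_pos (hs.2 hsup)]
            · rw [if_neg hsup, if_neg (fun hc => hsup (hs.1 hc))]

private lemma exists_cycle_of_even_deg [Fintype V] [DecidableEq V] (H : SimpleGraph V)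
    [DecidableRel H.Adj]
    (hedge : ∃ a b, H.Adj a b)
    (heven : ∀ a : V, Even (Finset.univ.filter (H.Adj a)).card) :
    ∃ (a : V) (c : H.Walk a a), c.IsCycle := by
  classical
  obtain ⟨a₀, b₀, hab₀⟩ := hedge
  set P : ℕ → Prop := fun n => ∃ (a b : V) (p : H.Walk a b), p.IsPath ∧ p.length = n with hP
  have hP1 : P 1 := ⟨a₀, b₀, SimpleGraph.Walk.cons hab₀ SimpleGraph.Walk.nil, by
    simp [SimpleGraph.Walk.cons_isPath_iff, hab₀.ne], rfl⟩
  have hcard : 1 ≤ Fintype.card V := Fintype.card_pos_iff.2 ⟨a₀⟩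
  set n := Nat.findGreatest P (Fintype.card V) with hn
  have hn1 : 1 ≤ n := Nat.le_findGreatest hcard hP1
  obtain ⟨a, b, p, hp, hlen⟩ : P n := Nat.findGreatest_spec hcard hP1
  cases p with
  | nil => simp at hlen; omega
  | @cons _ d _ had p₀ =>
    rw [SimpleGraph.Walk.cons_isPath_iff] at hp
    -- the start vertex `a` has another neighbor `c` besides `d`
    have hd : d ∈ Finset.univ.filter (H.Adj a) := by simp [had]
    have h2 : 1 < (Finset.univ.filter (H.Adj a)).card := by
      have h1 : 1 ≤ (Finset.univ.filter (H.Adj a)).card := Finset.card_pos.2 ⟨d, hd⟩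
      have := heven a
      rcases this with ⟨k, hk⟩
      omega
    obtain ⟨c, hc, hcd⟩ := Finset.exists_mem_ne h2 d
    have hac : H.Adj a c := by simpa using hc
    by_cases hcs : c ∈ (SimpleGraph.Walk.cons had p₀).support
    · -- build a cycle
      have hca : c ≠ a := hac.ne'
      have hcp₀ : c ∈ p₀.support := by
        simp only [SimpleGraph.Walk.support_cons, List.mem_cons] at hcs
        tauto
      set r := p₀.takeUntil c hcp₀ with hr
      have hrp : r.IsPath := hp.1.takeUntil hcp₀
      have hrsub := p₀.support_takeUntil_subset hcp₀
      have har : a ∉ r.support := fun hmem => hp.2 (hrsub hmem)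
      have hrlen : r.length ≠ 0 := fun h0 =>
        hcd (SimpleGraph.Walk.eq_of_length_eq_zero h0).symm
      refine ⟨a, SimpleGraph.Walk.cons had (r.concat hac.symm), ?_⟩
      rw [SimpleGraph.Walk.cons_isCycle_iff]
      constructor
      · -- (r.concat (c→a)).IsPath
        rw [← SimpleGraph.Walk.isPath_reverse_iff, SimpleGraph.Walk.reverse_concat]
        rw [SimpleGraph.Walk.cons_isPath_iff]
        refine ⟨hrp.reverse, ?_⟩
        rw [SimpleGraph.Walk.support_reverse, List.mem_reverse]
        exact har
      · -- s(a,d) ∉ edges of r.concat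
        intro hmem
        rw [SimpleGraph.Walk.concat_eq_append, SimpleGraph.Walk.edges_append] at hmem
        rcases List.mem_append.1 hmem with hm | hm
        · exact har (r.fst_mem_support_of_mem_edges hm)
        · simp only [SimpleGraph.Walk.edges_cons, SimpleGraph.Walk.edges_nil,
            List.mem_singleton] at hm
          rcases Sym2.eq_iff.1 hm with ⟨hac', _⟩ | ⟨_, hdc⟩
          · exact hca hac'.symm
          · exact hcd hdc.symm
    · -- extend the path, contradicting maximality
      have hnew : (SimpleGraph.Walk.cons hac.symm (SimpleGraph.Walk.cons had p₀)).IsPath := by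
        rw [SimpleGraph.Walk.cons_isPath_iff]
        exact ⟨by rw [SimpleGraph.Walk.cons_isPath_iff]; exact hp, hcs⟩
      rw [SimpleGraph.Walk.length_cons] at hlen
      have hlt : n + 1 < Fintype.card V := by
        have := hnew.length_lt
        simp only [SimpleGraph.Walk.length_cons] at this
        omega
      have : n + 1 ≤ n := Nat.le_findGreatest (le_of_lt hlt)
        ⟨c, b, _, hnew, by simp [SimpleGraph.Walk.length_cons]; omega⟩
      omega

/-- From two distinct paths with the same endpoints, extract a cycle whose edges lie in
the symmetric difference of the two edge sets, with support inside the union of supports. -/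
private lemma key_cycle [Fintype V] [DecidableEq V] {G : SimpleGraph V} {u v : V}
    (p q : G.Walk u v) (hp : p.IsPath) (hq : q.IsPath) (hne : p ≠ q) :
    ∃ (a : V) (c : G.Walk a a), c.IsCycle ∧
      (∀ e ∈ c.edges, (e ∈ p.edges ∧ e ∉ q.edges) ∨ (e ∈ q.edges ∧ e ∉ p.edges)) ∧
      (∀ w ∈ c.support, w ∈ p.support ∨ w ∈ q.support) := by
  have huv : u ≠ v := by
    rintro rfl
    exact hne (((SimpleGraph.Walk.isPath_iff_eq_nil (p := p)).1 hp).trans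
      ((SimpleGraph.Walk.isPath_iff_eq_nil (p := q)).1 hq).symm)
  have hplen : p.length ≠ 0 := fun h0 => huv (SimpleGraph.Walk.eq_of_length_eq_zero h0)
  have hqlen : q.length ≠ 0 := fun h0 => huv (SimpleGraph.Walk.eq_of_length_eq_zero h0)
  -- the symmetric-difference graph
  set H : SimpleGraph V :=
    { Adj := fun a b => (s(a, b) ∈ p.edges ∧ s(a, b) ∉ q.edges) ∨
        (s(a, b) ∈ q.edges ∧ s(a, b) ∉ p.edges)
      symm := by
        constructor
        intro a b hab
        rwa [Sym2.eq_swap] at hab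
      loopless := by
        constructor
        intro a ha
        rcases ha with ⟨h1, _⟩ | ⟨h1, _⟩
        · exact (G.loopless.irrefl a) (p.adj_of_mem_edges h1)
        · exact (G.loopless.irrefl a) (q.adj_of_mem_edges h1) } with hH
  haveI : DecidableRel H.Adj := fun a b =>
    inferInstanceAs (Decidable (_ ∨ _))
  have hHG : H ≤ G := by
    intro a b hab
    rcases hab with ⟨h1, _⟩ | ⟨h1, _⟩
    · exact p.adj_of_mem_edges h1
    · exact q.adj_of_mem_edges h1
  -- H has an edge
  have hedge : ∃ a b, H.Adj a b := by
    by_contra hcon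
    push_neg at hcon
    refine hne (path_eq_of_edges_eq p q hp hq fun e => ?_)
    induction e using Sym2.ind with
    | _ a b =>
      have h2 : ¬ ((s(a, b) ∈ p.edges ∧ s(a, b) ∉ q.edges) ∨
          (s(a, b) ∈ q.edges ∧ s(a, b) ∉ p.edges)) := hcon a b
      tauto
  -- every vertex has even degree in H
  have heven : ∀ a : V, Even (Finset.univ.filter (H.Adj a)).card := by
    intro a
    have hfil : Finset.univ.filter (H.Adj a) = symmDiff (nbr p.edges a) (nbr q.edges a) := by
      ext b
      simp only [Finset.mem_filter, Finset.mem_univ, true_and, Finset.mem_symmDiff, mem_nbr]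
      exact Iff.rfl
    have hdisj : (symmDiff (nbr p.edges a) (nbr q.edges a)).card
        + 2 * ((nbr p.edges a) ∩ (nbr q.edges a)).card
        = (nbr p.edges a).card + (nbr q.edges a).card := by
      rw [symmDiff_eq_sup_sdiff_inf]
      simp only [Finset.sup_eq_union, Finset.inf_eq_inter]
      rw [Finset.card_sdiff_of_subset (Finset.inter_subset_union)]
      have := Finset.card_union_add_card_inter (nbr p.edges a) (nbr q.edges a)
      have hle : ((nbr p.edges a) ∩ (nbr q.edges a)).card
          ≤ ((nbr p.edges a) ∪ (nbr q.edges a)).card :=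
        Finset.card_le_card Finset.inter_subset_union
      omega
    have hpc := nbr_card p hp a
    have hqc := nbr_card q hq a
    rw [if_neg hplen] at hpc
    rw [if_neg hqlen] at hqc
    rw [hfil, Nat.even_iff]
    by_cases hauv : a = u ∨ a = v
    · rw [if_pos hauv] at hpc hqc
      omega
    · rw [if_neg hauv] at hpc hqc
      have h1 : (nbr p.edges a).card = 2 ∨ (nbr p.edges a).card = 0 := by
        split_ifs at hpc <;> omega
      have h2 : (nbr q.edges a).card = 2 ∨ (nbr q.edges a).card = 0 := by
        split_ifs at hqc <;> omega
      omega
  obtain ⟨a, c, hc⟩ := exists_cycle_of_even_deg H hedge heven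
  have hsub : ∀ e ∈ c.edges, e ∈ G.edgeSet := fun e he =>
    (SimpleGraph.edgeSet_mono hHG) (c.edges_subset_edgeSet he)
  refine ⟨a, c.transfer G hsub, hc.transfer hsub, ?_, ?_⟩
  · intro e he
    rw [SimpleGraph.Walk.edges_transfer] at he
    have hHe := c.edges_subset_edgeSet he
    revert hHe
    induction e using Sym2.ind with
    | _ x y =>
      intro hHe
      rw [SimpleGraph.mem_edgeSet] at hHe
      exact hHe
  · intro w hw
    rw [SimpleGraph.Walk.support_transfer] at hw
    have hclen : c.length ≠ 0 := by have := hc.three_le_length; omega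
    obtain ⟨e, he, hwe⟩ := mem_edge_of_mem_support c hclen w hw
    have hadj : e ∈ H.edgeSet := c.edges_subset_edgeSet he
    clear he
    revert hwe hadj
    induction e using Sym2.ind with
    | _ x y =>
      intro hwe hadj
      rw [SimpleGraph.mem_edgeSet] at hadj
      rcases (hadj : H.Adj x y) with ⟨h1, _⟩ | ⟨h1, _⟩
      · rcases Sym2.mem_iff.1 hwe with rfl | rfl
        · exact Or.inl (p.fst_mem_support_of_mem_edges h1)
        · exact Or.inl (p.snd_mem_support_of_mem_edges h1)
      · rcases Sym2.mem_iff.1 hwe with rfl | rfl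
        · exact Or.inr (q.fst_mem_support_of_mem_edges h1)
        · exact Or.inr (q.snd_mem_support_of_mem_edges h1)


end AuxTangleFree

/-- The `(i,j)` entry of the path expansion matrix `B^(ℓ)`: the number of self-avoiding
paths of length `ℓ` from `i` to `j`. -/
noncomputable def pathCount {V : Type*} (G : SimpleGraph V) (ℓ : ℕ) (i j : V) : ℕ :=
  Set.ncard {p : G.Walk i j | p.IsPath ∧ p.length = ℓ}

/-- A graph is `ℓ`-tangle-free if, for every vertex `v`, any two cycles all of whose
vertices lie at graph distance at most `ℓ` from `v` have the same edge set. -/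
def TangleFree {V : Type*} [DecidableEq V] (G : SimpleGraph V) (ℓ : ℕ) : Prop :=
  ∀ (v a b : V) (c₁ : G.Walk a a) (c₂ : G.Walk b b),
    c₁.IsCycle → c₂.IsCycle →
    (∀ w ∈ c₁.support, G.edist v w ≤ (ℓ : ℕ∞)) →
    (∀ w ∈ c₂.support, G.edist v w ≤ (ℓ : ℕ∞)) →
    c₁.edges.toFinset = c₂.edges.toFinset

/-- In an `ℓ`-tangle-free graph, there are at most two self-avoiding paths of length
at most `ℓ` between any two vertices; in particular `B^(ℓ)_{ij} ≤ 2`. -/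
theorem tangleFree_pathCount_le_two {V : Type*} [Fintype V] [DecidableEq V]
    (G : SimpleGraph V) (ℓ : ℕ) (hℓ : 1 ≤ ℓ) (htf : TangleFree G ℓ) (i j : V) :
    Set.ncard {p : G.Walk i j | p.IsPath ∧ p.length ≤ ℓ} ≤ 2 ∧
    pathCount G ℓ i j ≤ 2 := by
  classical
  have hfin : {p : G.Walk i j | p.IsPath ∧ p.length ≤ ℓ}.Finite := by
    haveI : DecidableRel G.Adj := Classical.decRel _
    have : {p : G.Walk i j | p.IsPath ∧ p.length ≤ ℓ}
        ⊆ {p : G.Walk i j | p.length < ℓ + 1} := fun p hp => Nat.lt_succ_of_le hp.2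
    exact Set.Finite.subset (Set.toFinite _) this
  have hmain : Set.ncard {p : G.Walk i j | p.IsPath ∧ p.length ≤ ℓ} ≤ 2 := by
    by_contra hcon
    push_neg at hcon
    obtain ⟨p₁, hp₁, p₂, hp₂, p₃, hp₃, h12, h13, h23⟩ := (Set.two_lt_ncard hfin).1 hcon
    -- all support vertices are close to i
    have hball : ∀ p : G.Walk i j, p ∈ {p : G.Walk i j | p.IsPath ∧ p.length ≤ ℓ} →
        ∀ w ∈ p.support, G.edist i w ≤ (ℓ : ℕ∞) := by
      intro p hp w hw
      calc G.edist i w ≤ ((p.takeUntil w hw).length : ℕ∞) :=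
            SimpleGraph.Walk.edist_le _
        _ ≤ (ℓ : ℕ∞) := by
            have h1 := p.length_takeUntil_le hw
            have h2 := hp.2
            exact_mod_cast le_trans h1 h2
    obtain ⟨a₁, c₁, hc₁, hx₁, hs₁⟩ := key_cycle p₁ p₂ hp₁.1 hp₂.1 h12
    obtain ⟨a₂, c₂, hc₂, hx₂, hs₂⟩ := key_cycle p₁ p₃ hp₁.1 hp₃.1 h13
    obtain ⟨a₃, c₃, hc₃, hx₃, hs₃⟩ := key_cycle p₂ p₃ hp₂.1 hp₃.1 h23
    have hb₁ : ∀ w ∈ c₁.support, G.edist i w ≤ (ℓ : ℕ∞) := fun w hw =>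
      (hs₁ w hw).elim (hball p₁ hp₁ w) (hball p₂ hp₂ w)
    have hb₂ : ∀ w ∈ c₂.support, G.edist i w ≤ (ℓ : ℕ∞) := fun w hw =>
      (hs₂ w hw).elim (hball p₁ hp₁ w) (hball p₃ hp₃ w)
    have hb₃ : ∀ w ∈ c₃.support, G.edist i w ≤ (ℓ : ℕ∞) := fun w hw =>
      (hs₃ w hw).elim (hball p₂ hp₂ w) (hball p₃ hp₃ w)
    have he12 := htf i a₁ a₂ c₁ c₂ hc₁ hc₂ hb₁ hb₂
    have he13 := htf i a₁ a₃ c₁ c₃ hc₁ hc₃ hb₁ hb₃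
    -- pick an edge of c₁
    have hne : c₁.edges ≠ [] := by
      intro h0
      have := hc₁.three_le_length
      rw [← c₁.length_edges, h0] at this
      simp at this
    obtain ⟨e, he⟩ := List.exists_mem_of_ne_nil _ hne
    have he2 : e ∈ c₂.edges := by
      rw [← List.mem_toFinset, ← he12, List.mem_toFinset]; exact he
    have he3 : e ∈ c₃.edges := by
      rw [← List.mem_toFinset, ← he13, List.mem_toFinset]; exact he
    have X12 := hx₁ e he
    have X13 := hx₂ e he2
    have X23 := hx₃ e he3
    tauto
  refine ⟨hmain, ?_⟩
  have hsub : {p : G.Walk i j | p.IsPath ∧ p.length = ℓ}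
      ⊆ {p : G.Walk i j | p.IsPath ∧ p.length ≤ ℓ} := fun p hp => ⟨hp.1, le_of_eq hp.2⟩
  exact le_trans (Set.ncard_le_ncard hsub hfin) hmain
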